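/- Let R be a ring and M a left R-module such that every homogeneous component of the socle of M is finitely generated (i.e., for every simple R-module S, the sum of all submodules of M isomorphic to S is a finitely generated submodule). Then M is virtually semisimple if and only if M has an internal direct sum decomposition M = W ⊕ L where W is a semisimple R-module and L is a virtually semisimple R-module with Soc(L) = 0. -/

import Mathlib

universe u v w

/-- A left `R`-module `M` is *virtually semisimple* if every submodule of `M` is
isomorphic, as an `R`-module, to a direct summand of `M`. -/
def IsVirtuallySemisimple (R : Type u) [Ring R] (M : Type v) [AddCommGroup M] [Module R M] :
    Prop :=
  ∀ N : Submodule R M, ∃ K : Submodule R M, (∃ K' : Submodule R M, IsCompl K K') ∧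
    Nonempty (N ≃ₗ[R] K)

/-- A module is *completely virtually semisimple* if every submodule is virtually semisimple. -/
def IsCompletelyVirtuallySemisimple (R : Type u) [Ring R] (M : Type v) [AddCommGroup M]
    [Module R M] : Prop :=
  ∀ N : Submodule R M, IsVirtuallySemisimple R N


/-- The socle of a module: the sum of all its simple submodules. -/
def moduleSocle (R : Type u) [Ring R] (M : Type v) [AddCommGroup M] [Module R M] :
    Submodule R M :=
  sSup {N : Submodule R M | IsSimpleModule R N}

namespace VS

variable {R : Type u} [Ring R] {M : Type v} [AddCommGroup M] [Module R M]

open Submodule LinearMap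

/-- Equivalence of a submodule `T ≤ D` with its comap under `D.subtype`. -/
noncomputable def equivComapSubtype {T D : Submodule R M} (h : T ≤ D) :
    (T.comap D.subtype) ≃ₗ[R] T :=
  (Submodule.equivMapOfInjective D.subtype D.injective_subtype _).trans
    (LinearEquiv.ofEq _ _ (by rw [Submodule.map_comap_subtype, inf_eq_right.2 h]))

theorem map_sSup_pred {X : Type v} [AddCommGroup X] [Module R X]
    (P : ∀ (A : Type v) [AddCommGroup A] [Module R A], Prop)
    (hP : ∀ (A : Type v) [AddCommGroup A] [Module R A] (B : Type v) [AddCommGroup B]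
      [Module R B], (A ≃ₗ[R] B) → P A → P B)
    (σ : X →ₗ[R] M) (hσ : Function.Injective σ) :
    (sSup {N : Submodule R X | P N}).map σ
      = sSup {N : Submodule R M | N ≤ LinearMap.range σ ∧ P N} := by
  apply le_antisymm
  · rw [sSup_eq_iSup', Submodule.map_iSup]
    apply iSup_le
    rintro ⟨N, hN⟩
    refine le_sSup ⟨?_, hP _ _ (Submodule.equivMapOfInjective σ hσ N) hN⟩
    rw [← Submodule.map_top]
    exact Submodule.map_mono le_top
  · apply sSup_le
    rintro N ⟨hle, hN⟩
    have hmc : (N.comap σ).map σ = N := by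
      rw [Submodule.map_comap_eq, inf_eq_right.2 hle]
    have hPc : P (N.comap σ) :=
      hP _ _ ((Submodule.equivMapOfInjective σ hσ _).trans (LinearEquiv.ofEq _ _ hmc)).symm hN
    calc N = (N.comap σ).map σ := hmc.symm
      _ ≤ _ := Submodule.map_mono (le_sSup hPc)

theorem hP_simple : ∀ (A : Type v) [AddCommGroup A] [Module R A] (B : Type v) [AddCommGroup B]
    [Module R B], (A ≃ₗ[R] B) → IsSimpleModule R A → IsSimpleModule R B :=
  fun _A _ _ _B _ _ e hA => letI := hA; IsSimpleModule.congr e.symm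

theorem map_bot_or_equiv (f : M →ₗ[R] M) (N : Submodule R M) (hN : IsSimpleModule R N) :
    N.map f = ⊥ ∨ Nonempty (N ≃ₗ[R] N.map f) := by
  haveI := hN
  have hr : LinearMap.range (f.comp N.subtype) = N.map f := by
    rw [LinearMap.range_comp, Submodule.range_subtype]
  rcases eq_bot_or_eq_top (LinearMap.ker (f.comp N.subtype)) with hk | hk
  · exact Or.inr ⟨(LinearEquiv.ofInjective _ (LinearMap.ker_eq_bot.1 hk)).trans
      (LinearEquiv.ofEq _ _ hr)⟩
  · rw [LinearMap.ker_eq_top] at hk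
    exact Or.inl (by rw [← hr, hk, LinearMap.range_zero])

theorem le_map_proj_sup {K K' : Submodule R M} (hc : IsCompl K K') (N : Submodule R M) :
    N ≤ N.map (K.subtype ∘ₗ K.projectionOnto K' hc) ⊔
        N.map (K'.subtype ∘ₗ K'.projectionOnto K hc.symm) := by
  intro x hx
  rw [Submodule.mem_sup]
  exact ⟨_, Submodule.mem_map_of_mem hx, _, Submodule.mem_map_of_mem hx,
    Submodule.projection_add_projection_eq_self hc x⟩

noncomputable def prodEquivSup {A B : Submodule R M} (h : A ⊓ B = ⊥) :
    (A × B) ≃ₗ[R] ↥(A ⊔ B) := by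
  have hinj : Function.Injective (A.subtype.coprod B.subtype) := by
    rw [← LinearMap.ker_eq_bot, eq_bot_iff]
    rintro ⟨a, b⟩ hab
    rw [LinearMap.mem_ker, LinearMap.coprod_apply] at hab
    simp only [Submodule.coe_subtype] at hab
    have haB : (a : M) ∈ A ⊓ B := by
      refine ⟨a.2, ?_⟩
      have hab' : (a : M) = -(b : M) := by
        rw [eq_neg_iff_add_eq_zero]; exact hab
      rw [hab']; exact B.neg_mem b.2
    rw [h] at haB
    have ha0 : (a : M) = 0 := haB
    have hb0 : (b : M) = 0 := by
      rw [ha0, zero_add] at hab; exact hab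
    refine Submodule.mem_bot _ |>.2 ?_
    exact Prod.ext (Subtype.ext ha0) (Subtype.ext hb0)
  exact (LinearEquiv.ofInjective _ hinj).trans (LinearEquiv.ofEq _ _ (by
    rw [LinearMap.range_coprod, Submodule.range_subtype, Submodule.range_subtype]))

noncomputable def equivSup {A B A' B' : Submodule R M} (h : A ⊓ B = ⊥) (h' : A' ⊓ B' = ⊥)
    (eA : A ≃ₗ[R] A') (eB : B ≃ₗ[R] B') : ↥(A ⊔ B) ≃ₗ[R] ↥(A' ⊔ B') :=
  (prodEquivSup h).symm.trans ((eA.prodCongr eB).trans (prodEquivSup h'))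

theorem isCompl_comap {K A B : Submodule R M} (hA : A ≤ K) (hB : B ≤ K)
    (hinf : A ⊓ B = ⊥) (hsup : A ⊔ B = K) :
    IsCompl (A.comap K.subtype) (B.comap K.subtype) := by
  constructor
  · rw [disjoint_iff, eq_bot_iff]
    intro x hx
    have : (x : M) ∈ A ⊓ B := ⟨hx.1, hx.2⟩
    rw [hinf] at this
    simpa using this
  · rw [codisjoint_iff]
    apply Submodule.map_injective_of_injective K.injective_subtype
    rw [Submodule.map_sup, Submodule.map_comap_subtype, Submodule.map_comap_subtype,
      inf_eq_right.2 hA, inf_eq_right.2 hB, hsup, Submodule.map_top, Submodule.range_subtype]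

theorem mixed_disjoint {W L A B C D : Submodule R M} (hWL : W ⊓ L = ⊥)
    (hA : A ≤ W) (hB : B ≤ W) (hC : C ≤ L) (hD : D ≤ L)
    (hAB : A ⊓ B = ⊥) (hCD : C ⊓ D = ⊥) : (A ⊔ C) ⊓ (B ⊔ D) = ⊥ := by
  rw [eq_bot_iff]
  rintro x ⟨hx1, hx2⟩
  obtain ⟨a, ha, c, hc, rfl⟩ := Submodule.mem_sup.1 hx1
  obtain ⟨b, hb, d, hd, heq⟩ := Submodule.mem_sup.1 hx2
  have hab : a - b ∈ W := W.sub_mem (hA ha) (hB hb)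
  have hdc : a - b = d - c := by
    rw [sub_eq_sub_iff_add_eq_add]
    exact heq.symm.trans (add_comm b d)
  have habL : a - b ∈ L := by rw [hdc]; exact L.sub_mem (hD hd) (hC hc)
  have h0 : a - b ∈ W ⊓ L := ⟨hab, habL⟩
  rw [hWL] at h0
  have hab0 : a = b := by
    have := (Submodule.mem_bot R).1 h0
    rwa [sub_eq_zero] at this
  have hcd0 : c = d := by
    have := (Submodule.mem_bot R).1 h0
    rw [hdc] at this
    have := (sub_eq_zero.1 this).symm
    exact this
  have ha' : a ∈ A ⊓ B := ⟨ha, by rwa [hab0]⟩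
  have hc' : c ∈ C ⊓ D := ⟨hc, by rwa [hcd0]⟩
  rw [hAB] at ha'; rw [hCD] at hc'
  rw [(Submodule.mem_bot R).1 ha', (Submodule.mem_bot R).1 hc', add_zero]
  exact Submodule.zero_mem ⊥

theorem socle_eq_bot {L : Submodule R M}
    (h : ∀ T : Submodule R M, T ≤ L → ¬ IsSimpleModule R T) :
    moduleSocle R L = ⊥ := by
  rw [moduleSocle, sSup_eq_bot]
  intro N' hN'
  exfalso
  refine h (N'.map L.subtype) (Submodule.map_subtype_le _ _) ?_
  haveI : IsSimpleModule R N' := hN'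
  exact hP_simple _ _ (Submodule.equivMapOfInjective L.subtype L.injective_subtype N') hN'

theorem isSemisimpleModule_of_le_sSup {C : Submodule R M}
    (h : C ≤ sSup {T : Submodule R M | T ≤ C ∧ IsSimpleModule R T}) :
    IsSemisimpleModule R C := by
  apply IsSemisimpleModule.of_sSup_simples_eq_top
  apply Submodule.map_injective_of_injective C.injective_subtype
  rw [map_sSup_pred (fun A _ _ => IsSimpleModule R A) hP_simple C.subtype C.injective_subtype,
    Submodule.map_top]
  simp only [Submodule.range_subtype]
  exact le_antisymm (sSup_le fun T hT => hT.1) h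

theorem eq_sSup_simples_le {K : Submodule R M} (h : IsSemisimpleModule R K) :
    K = sSup {T : Submodule R M | T ≤ K ∧ IsSimpleModule R T} := by
  haveI := h
  have h1 := map_sSup_pred (M := M) (fun A _ _ => IsSimpleModule R A) hP_simple
    K.subtype K.injective_subtype
  rw [IsSemisimpleModule.sSup_simples_eq_top, Submodule.map_top] at h1
  simp only [Submodule.range_subtype] at h1
  exact h1

theorem map_sSup_iso {S : Type v} [AddCommGroup S] [Module R S] {X : Type v} [AddCommGroup X]
    [Module R X] (σ : X →ₗ[R] M) (hσ : Function.Injective σ) :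
    (sSup {N : Submodule R X | Nonempty (N ≃ₗ[R] S)}).map σ
      = sSup {N : Submodule R M | N ≤ LinearMap.range σ ∧ Nonempty (N ≃ₗ[R] S)} :=
  map_sSup_pred (fun A _ _ => Nonempty (A ≃ₗ[R] S))
    (fun _A _ _ _B _ _ e hA => hA.elim fun g => ⟨e.symm.trans g⟩) σ hσ

end VS

theorem stmt_5_aux (R : Type u) [Ring R] (M : Type v) [AddCommGroup M] [Module R M]
    (hhom : ∀ (S : Type v) [AddCommGroup S] [Module R S], IsSimpleModule R S →
      (sSup {N : Submodule R M | Nonempty (N ≃ₗ[R] S)}).FG) :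
    (∀ N : Submodule R M, ∃ K : Submodule R M, (∃ K' : Submodule R M, IsCompl K K') ∧
      Nonempty (N ≃ₗ[R] K)) ↔
      ∃ W L : Submodule R M, IsCompl W L ∧ IsSemisimpleModule R W ∧
        (∀ N : Submodule R ↥L, ∃ K : Submodule R ↥L, (∃ K' : Submodule R ↥L, IsCompl K K') ∧
          Nonempty (N ≃ₗ[R] K)) ∧ moduleSocle R L = ⊥ := by
  constructor
  · intro hvs
    classical
    set Soc := moduleSocle R M with hSocd
    have hSocdef : Soc = sSup {N : Submodule R M | IsSimpleModule R N} := rfl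
    have hatomle : ∀ T : Submodule R M, IsSimpleModule R T → T ≤ Soc := by
      intro T hT; rw [hSocdef]; exact le_sSup hT
    obtain ⟨K, ⟨K', hc⟩, ⟨f⟩⟩ := hvs Soc
    have hSocle : Soc ≤ sSup {T : Submodule R M | T ≤ Soc ∧ IsSimpleModule R T} := by
      rw [hSocdef]
      exact sSup_le fun T hT => le_sSup ⟨hatomle T hT, hT⟩
    have hSocss : IsSemisimpleModule R ↥Soc := VS.isSemisimpleModule_of_le_sSup hSocle
    have hKss : IsSemisimpleModule R ↥K := letI := hSocss; IsSemisimpleModule.congr f.symm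
    set ψ : ↥Soc →ₗ[R] M := K.subtype ∘ₗ f.toLinearMap with hψdef
    have hψinj : Function.Injective ψ := K.injective_subtype.comp f.injective
    have hψrange : LinearMap.range ψ = K := by
      rw [hψdef, LinearMap.range_comp, LinearEquiv.range, Submodule.map_top,
        Submodule.range_subtype]
    have hK' : ∀ T : Submodule R M, T ≤ K' → ¬ IsSimpleModule R T := by
      intro T hTK' hT
      haveI := hT
      have hFG := hhom ↥T hT
      have hmems : ∀ N : Submodule R M, Nonempty (N ≃ₗ[R] ↥T) → IsSimpleModule R N :=
        fun N h => h.elim fun g => IsSimpleModule.congr g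
      set C := sSup {N : Submodule R M | Nonempty (N ≃ₗ[R] ↥T)} with hCdef
      have hCss : IsSemisimpleModule R ↥C := VS.isSemisimpleModule_of_le_sSup
        (by rw [hCdef]; exact sSup_le fun N hN => le_sSup ⟨le_sSup hN, hmems N hN⟩)
      have hCfg : Module.Finite R ↥C := Module.Finite.iff_fg.2 hFG
      haveI := hCss; haveI := hCfg
      haveI : IsArtinian R ↥C := inferInstance
      set GK := sSup {N : Submodule R M | N ≤ K ∧ Nonempty (N ≃ₗ[R] ↥T)} with hGKd
      set GK' := sSup {N : Submodule R M | N ≤ K' ∧ Nonempty (N ≃ₗ[R] ↥T)} with hGK'd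
      set C' := sSup {N' : Submodule R ↥Soc | Nonempty (N' ≃ₗ[R] ↥T)} with hC'd
      have h1 : C'.map Soc.subtype = C := by
        rw [hC'd, VS.map_sSup_iso Soc.subtype Soc.injective_subtype, hCdef]
        simp only [Submodule.range_subtype]
        apply le_antisymm (sSup_le fun N hN => le_sSup hN.2)
        exact sSup_le fun N hN => le_sSup ⟨hatomle N (hmems N hN), hN⟩
      have h2 : C'.map ψ = GK := by
        rw [hC'd, VS.map_sSup_iso ψ hψinj, hψrange, hGKd]
      have eC : ↥C ≃ₗ[R] ↥GK :=
        ((LinearEquiv.ofEq _ _ h1).symm.trans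
          (Submodule.equivMapOfInjective Soc.subtype Soc.injective_subtype C').symm).trans
          ((Submodule.equivMapOfInjective ψ hψinj C').trans (LinearEquiv.ofEq _ _ h2))
      have hGKC : GK ≤ C := by
        rw [hGKd, hCdef]; exact sSup_le fun N hN => le_sSup hN.2
      set g : ↥C →ₗ[R] ↥C := (Submodule.inclusion hGKC) ∘ₗ eC.toLinearMap with hgd
      have hginj : Function.Injective g :=
        (Submodule.inclusion_injective hGKC).comp eC.injective
      have hgsurj := IsArtinian.surjective_of_injective_endomorphism g hginj
      have hCGK : C ≤ GK := by
        intro x hx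
        obtain ⟨y, hy⟩ := hgsurj ⟨x, hx⟩
        have hval : ((g y : ↥C) : M) ∈ GK := (eC y).2
        rw [hy] at hval
        exact hval
      have hGK'C : GK' ≤ C := sSup_le fun N hN => le_sSup hN.2
      have hGK'bot : GK' = ⊥ := by
        rw [eq_bot_iff]
        calc GK' ≤ GK ⊓ GK' := le_inf (hGK'C.trans hCGK) le_rfl
          _ ≤ K ⊓ K' := inf_le_inf (sSup_le fun N hN => hN.1) (sSup_le fun N hN => hN.1)
          _ = ⊥ := hc.disjoint.eq_bot
      have hTGK' : T ≤ GK' := le_sSup ⟨hTK', ⟨LinearEquiv.refl R ↥T⟩⟩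
      rw [hGK'bot, le_bot_iff] at hTGK'
      exact (isSimpleModule_iff_isAtom.1 hT).1 hTGK'
    have hsocK' : moduleSocle R ↥K' = ⊥ := VS.socle_eq_bot hK'
    have hKeq : K = sSup {T : Submodule R M | T ≤ K ∧ IsSimpleModule R T} :=
      VS.eq_sSup_simples_le hKss
    have hK'vss : ∀ N' : Submodule R ↥K', ∃ Ka : Submodule R ↥K',
        (∃ Kb : Submodule R ↥K', IsCompl Ka Kb) ∧ Nonempty (N' ≃ₗ[R] Ka) := by
      intro N'
      obtain ⟨D, ⟨D'', hcD⟩, ⟨fN⟩⟩ := hvs (N'.map K'.subtype)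
      have hD : ∀ T : Submodule R M, T ≤ D → ¬ IsSimpleModule R T := by
        intro T hTD hT
        haveI := hT
        have e1 : ↥(T.comap D.subtype) ≃ₗ[R] ↥T := VS.equivComapSubtype hTD
        set φ : ↥D →ₗ[R] M := (N'.map K'.subtype).subtype ∘ₗ fN.symm.toLinearMap with hφd
        have hφinj : Function.Injective φ :=
          (Submodule.injective_subtype _).comp fN.symm.injective
        have hrange : LinearMap.range φ = N'.map K'.subtype := by
          rw [hφd, LinearMap.range_comp, LinearEquiv.range, Submodule.map_top,
            Submodule.range_subtype]
        have hTim : ((T.comap D.subtype).map φ) ≤ K' := by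
          refine le_trans ?_ (Submodule.map_subtype_le K' N')
          rw [← hrange]
          exact (Submodule.map_mono le_top).trans (by rw [Submodule.map_top])
        refine hK' _ hTim ?_
        exact VS.hP_simple _ _ (e1.symm.trans (Submodule.equivMapOfInjective φ hφinj _)) hT
      have hsimD'' : ∀ T : Submodule R M, IsSimpleModule R T → T ≤ D'' := by
        intro T hT
        have hle := VS.le_map_proj_sup hcD T
        rcases VS.map_bot_or_equiv (D.subtype ∘ₗ D.projectionOnto D'' hcD) T hT
          with h0 | hg
        · rw [h0, bot_sup_eq] at hle
          refine hle.trans ?_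
          rintro x ⟨y, -, rfl⟩
          exact ((D''.projectionOnto D hcD.symm) y).2
        · obtain ⟨g⟩ := hg
          refine absurd (VS.hP_simple _ _ g hT)
            (hD (T.map (D.subtype ∘ₗ D.projectionOnto D'' hcD)) ?_)
          rintro x ⟨y, -, rfl⟩
          exact ((D.projectionOnto D'' hcD) y).2
      have hKD'' : K ≤ D'' := by
        rw [hKeq]
        exact sSup_le fun T hT => hsimD'' T hT.2
      set π : M →ₗ[R] M := K'.subtype ∘ₗ K'.projectionOnto K hc.symm with hπd
      have hπK : ∀ x : M, π x = 0 ↔ x ∈ K := by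
        intro x
        rw [hπd]
        simp only [LinearMap.comp_apply, Submodule.coe_subtype, ZeroMemClass.coe_eq_zero]
        exact Submodule.linearProjOfIsCompl_apply_eq_zero_iff hc.symm
      have hπmem : ∀ x : M, π x ∈ K' := fun x => by
        rw [hπd]; exact ((K'.projectionOnto K hc.symm) x).2
      have hDK : D ⊓ K = ⊥ := by
        haveI := hKss
        rcases IsSemisimpleModule.eq_bot_or_exists_simple_le ((D ⊓ K).comap K.subtype)
          with h0 | ⟨m, hm, hms⟩
        · have h3 := congrArg (Submodule.map K.subtype) h0
          rw [Submodule.map_comap_subtype, Submodule.map_bot] at h3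
          rwa [inf_eq_right.2 inf_le_right] at h3
        · exfalso
          haveI := hms
          refine hD (m.map K.subtype) ?_ ?_
          · refine le_trans (Submodule.map_mono hm) ?_
            rw [Submodule.map_comap_subtype]
            exact le_trans inf_le_right inf_le_left
          · exact VS.hP_simple _ _
              (Submodule.equivMapOfInjective K.subtype K.injective_subtype m) hms
      have hpdle : D.map π ≤ K' := by rintro x ⟨y, -, rfl⟩; exact hπmem y
      have hpd''le : D''.map π ≤ K' := by rintro x ⟨y, -, rfl⟩; exact hπmem y
      have hsup : D.map π ⊔ D''.map π = K' := by
        rw [← Submodule.map_sup, hcD.codisjoint.eq_top, Submodule.map_top, hπd,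
          LinearMap.range_comp, Submodule.range_projectionOnto, Submodule.map_top,
          Submodule.range_subtype]
      have hdisj : D.map π ⊓ D''.map π = ⊥ := by
        rw [eq_bot_iff]
        rintro x ⟨hx1, hx2⟩
        obtain ⟨d, hd, rfl⟩ := hx1
        obtain ⟨d'', hd'', heq⟩ := hx2
        have hker : d - d'' ∈ K := by
          rw [← hπK, map_sub, heq, sub_self]
        have hdD'' : d ∈ D'' := by
          have h4 := D''.add_mem (hKD'' hker) hd''
          simpa using h4
        have h5 : d ∈ D ⊓ D'' := ⟨hd, hdD''⟩
        rw [hcD.disjoint.eq_bot] at h5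
        rw [(Submodule.mem_bot R).1 h5, map_zero]
        exact Submodule.zero_mem ⊥
      have eDpd : ↥D ≃ₗ[R] ↥(D.map π) := by
        have hinj : Function.Injective (π ∘ₗ D.subtype) := by
          rw [← LinearMap.ker_eq_bot, eq_bot_iff]
          rintro x hx
          rw [LinearMap.mem_ker, LinearMap.comp_apply] at hx
          have h1 : (x : M) ∈ K := (hπK _).1 hx
          have h2 : (x : M) ∈ D ⊓ K := ⟨x.2, h1⟩
          rw [hDK] at h2
          rw [Submodule.mem_bot]
          exact Subtype.ext ((Submodule.mem_bot R).1 h2)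
        refine (LinearEquiv.ofInjective _ hinj).trans (LinearEquiv.ofEq _ _ ?_)
        rw [LinearMap.range_comp, Submodule.range_subtype]
      refine ⟨(D.map π).comap K'.subtype, ⟨(D''.map π).comap K'.subtype,
        VS.isCompl_comap hpdle hpd''le hdisj hsup⟩, ⟨?_⟩⟩
      exact ((Submodule.equivMapOfInjective K'.subtype K'.injective_subtype N').trans
        (fN.trans eDpd)).trans (VS.equivComapSubtype hpdle).symm
    exact ⟨K, K', hc, hKss, hK'vss, hsocK'⟩
  · rintro ⟨W, L, hc, hW, hL, -⟩ N
    classical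
    have hAW : N ⊓ W ≤ W := inf_le_right
    have hAN : N ⊓ W ≤ N := inf_le_left
    haveI : IsSemisimpleModule R ↥W := hW
    obtain ⟨Bw, hABw⟩ := exists_isCompl ((N ⊓ W).comap W.subtype)
    set A := N ⊓ W with hAd
    set B := Bw.map W.subtype with hBd
    have hBW : B ≤ W := Submodule.map_subtype_le _ _
    have hAmap : (A.comap W.subtype).map W.subtype = A := by
      rw [Submodule.map_comap_subtype, inf_eq_right.2 hAW]
    have hABbot : A ⊓ B = ⊥ := by
      rw [← hAmap, hBd, ← Submodule.map_inf _ W.injective_subtype,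
        hABw.disjoint.eq_bot, Submodule.map_bot]
    have hABsup : A ⊔ B = W := by
      rw [← hAmap, hBd, ← Submodule.map_sup, hABw.codisjoint.eq_top, Submodule.map_top,
        Submodule.range_subtype]
    set N' := N ⊓ (B ⊔ L) with hN'd
    have hWL : W ⊓ L = ⊥ := hc.disjoint.eq_bot
    have hBLW : (B ⊔ L) ⊓ W = B := by
      rw [sup_inf_assoc_of_le L hBW, inf_comm L W, hWL, sup_bot_eq]
    have h1 : A ⊓ N' ≤ B := by
      calc A ⊓ N' ≤ W ⊓ (B ⊔ L) := inf_le_inf hAW inf_le_right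
        _ = (B ⊔ L) ⊓ W := inf_comm _ _
        _ = B := hBLW
    have hAN' : A ⊓ N' = ⊥ := by
      rw [eq_bot_iff, ← hABbot]
      exact le_inf inf_le_left h1
    have hANsup : A ⊔ N' = N := by
      apply le_antisymm (sup_le hAN inf_le_left)
      intro n hn
      have hn' : n ∈ W ⊔ L := by rw [hc.codisjoint.eq_top]; trivial
      obtain ⟨w, hw, l, hl, rfl⟩ := Submodule.mem_sup.1 hn'
      have hwW : w ∈ A ⊔ B := by rw [hABsup]; exact hw
      obtain ⟨a, ha, b, hb, rfl⟩ := Submodule.mem_sup.1 hwW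
      rw [Submodule.mem_sup]
      refine ⟨a, ha, b + l, ⟨?_, Submodule.mem_sup.2 ⟨b, hb, l, hl, rfl⟩⟩, by abel⟩
      have h2 : (a + b + l) - a ∈ N := N.sub_mem hn (hAN ha)
      rwa [show a + b + l - a = b + l from by abel] at h2
    set π : M →ₗ[R] M := L.subtype ∘ₗ L.projectionOnto W hc.symm with hπd
    have hπker : ∀ x : M, π x = 0 ↔ x ∈ W := by
      intro x
      rw [hπd]
      simp only [LinearMap.comp_apply, Submodule.coe_subtype, ZeroMemClass.coe_eq_zero]
      exact Submodule.linearProjOfIsCompl_apply_eq_zero_iff hc.symm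
    have hπmem : ∀ x : M, π x ∈ L := fun x => by
      rw [hπd]; exact ((L.projectionOnto W hc.symm) x).2
    have hN'W : N' ⊓ W ≤ ⊥ := by
      calc N' ⊓ W = N ⊓ ((B ⊔ L) ⊓ W) := by rw [hN'd, inf_assoc]
        _ = N ⊓ B := by rw [hBLW]
        _ ≤ A ⊓ B := le_inf (le_inf inf_le_left (inf_le_right.trans hBW)) inf_le_right
        _ = ⊥ := hABbot
    have hφinj : Function.Injective (π ∘ₗ N'.subtype) := by
      rw [← LinearMap.ker_eq_bot, eq_bot_iff]
      rintro x hx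
      rw [LinearMap.mem_ker, LinearMap.comp_apply] at hx
      have h3 : (x : M) ∈ W := (hπker _).1 hx
      have h4 := hN'W ⟨x.2, h3⟩
      rw [Submodule.mem_bot]
      exact Subtype.ext ((Submodule.mem_bot R).1 h4)
    have ePN' : ↥N' ≃ₗ[R] ↥(N'.map π) := by
      refine (LinearEquiv.ofInjective _ hφinj).trans (LinearEquiv.ofEq _ _ ?_)
      rw [LinearMap.range_comp, Submodule.range_subtype]
    have hPL : N'.map π ≤ L := by rintro x ⟨y, -, rfl⟩; exact hπmem y
    obtain ⟨Kl, ⟨Kl', hcKl⟩, ⟨fP⟩⟩ := hL ((N'.map π).comap L.subtype)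
    set Km := Kl.map L.subtype with hKmd
    set Km' := Kl'.map L.subtype with hKm'd
    have hKmL : Km ≤ L := Submodule.map_subtype_le _ _
    have hKm'L : Km' ≤ L := Submodule.map_subtype_le _ _
    have hKminf : Km ⊓ Km' = ⊥ := by
      rw [hKmd, hKm'd, ← Submodule.map_inf _ L.injective_subtype, hcKl.disjoint.eq_bot,
        Submodule.map_bot]
    have hKmsup : Km ⊔ Km' = L := by
      rw [hKmd, hKm'd, ← Submodule.map_sup, hcKl.codisjoint.eq_top, Submodule.map_top,
        Submodule.range_subtype]
    have eN'Km : ↥N' ≃ₗ[R] ↥Km :=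
      ePN'.trans ((VS.equivComapSubtype hPL).symm.trans
        (fP.trans (Submodule.equivMapOfInjective L.subtype L.injective_subtype Kl)))
    have hAKm : A ⊓ Km = ⊥ := by
      rw [eq_bot_iff, ← hWL]
      exact inf_le_inf hAW hKmL
    refine ⟨A ⊔ Km, ⟨B ⊔ Km', ?_, ?_⟩, ?_⟩
    · rw [disjoint_iff]
      exact VS.mixed_disjoint hWL hAW hBW hKmL hKm'L hABbot hKminf
    · rw [codisjoint_iff, sup_sup_sup_comm, hABsup, hKmsup, hc.codisjoint.eq_top]
    · exact ⟨(LinearEquiv.ofEq _ _ hANsup.symm).trans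
        (VS.equivSup hAN' hAKm (LinearEquiv.refl R ↥A) eN'Km)⟩


/-- Suppose every homogeneous component of the socle of `M` is finitely generated (for every
simple module `S`, the sum of all submodules of `M` isomorphic to `S` is finitely generated).
Then `M` is virtually semisimple iff `M = W ⊕ L` (internally) with `W` semisimple and `L`
virtually semisimple with `Soc(L) = 0`. -/
theorem stmt_5 (R : Type u) [Ring R] (M : Type v) [AddCommGroup M] [Module R M]
    (hhom : ∀ (S : Type v) [AddCommGroup S] [Module R S], IsSimpleModule R S →
      (sSup {N : Submodule R M | Nonempty (N ≃ₗ[R] S)}).FG) :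
    IsVirtuallySemisimple R M ↔
      ∃ W L : Submodule R M, IsCompl W L ∧ IsSemisimpleModule R W ∧
        IsVirtuallySemisimple R L ∧ moduleSocle R L = ⊥ := by
  exact stmt_5_aux R M hhom
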